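/- Let n ≥ 2, 0 < σ < 2, λ ∈ ℝ, δ > 0, and let W ∈ C^{1,1}_loc(ℝⁿ) ∩ L_σ be anti-symmetric about T_λ (W(x^λ) = -W(x) for all x). There exists a constant c > 0 depending only on n and σ with the following property: if W attains its minimum over Σ_λ at a point x̄ with λ - δ < x̄₁ < λ and W(x̄) < 0, then (-Δ)^{σ/2}W(x̄) ≤ c · C_{n,σ} · δ^{-σ} · W(x̄) < 0. -/

import Mathlib

open MeasureTheory Filter Metric Set Bornology

noncomputable section

/-- The space `ℝⁿ`. -/
abbrev En (n : ℕ) := EuclideanSpace ℝ (Fin n)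

/-- Membership in the weighted space `L_σ`. -/
def MemL (n : ℕ) (σ : ℝ) (w : En n → ℝ) : Prop :=
  LocallyIntegrable w volume ∧
    Integrable (fun x : En n => |w x| / (1 + ‖x‖ ^ ((n : ℝ) + σ))) volume

/-- `C^{1,1}_loc` on an open set `Ω`: near every point of `Ω`, `w` is
differentiable with Lipschitz-continuous derivative. -/
def C11locOn (n : ℕ) (Ω : Set (En n)) (w : En n → ℝ) : Prop :=
  ∀ x ∈ Ω, ∃ ε > 0, ∃ K : NNReal, ball x ε ⊆ Ω ∧
    (∀ y ∈ ball x ε, DifferentiableAt ℝ w y) ∧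
    LipschitzOnWith K (fderiv ℝ w) (ball x ε)

/-- `C^{1,1}_loc` on all of `ℝⁿ`. -/
def C11loc (n : ℕ) (w : En n → ℝ) : Prop := C11locOn n univ w

/-- `HasFracLap n σ c w x L` : the fractional Laplacian `(-Δ)^{σ/2} w`, with
normalization constant `c = C_{n,σ} > 0`, exists at `x` as a principal value
and is equal to `L`. -/
def HasFracLap (n : ℕ) (σ c : ℝ) (w : En n → ℝ) (x : En n) (L : ℝ) : Prop :=
  Tendsto
    (fun ε : ℝ => c * ∫ y in {y : En n | ε ≤ dist x y},
        (w x - w y) / dist x y ^ ((n : ℝ) + σ))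
    (nhdsWithin 0 (Ioi 0)) (nhds L)

/-- Reflection `x ↦ x^λ` about the hyperplane `T_λ = {x : x₁ = λ}`. -/
def reflPt (n : ℕ) [NeZero n] (l : ℝ) (x : En n) : En n :=
  WithLp.toLp 2 (fun i => if i = 0 then 2 * l - x 0 else x i)

/-- The half space `Σ_λ = {x : x₁ < λ}`. -/
def halfSpace (n : ℕ) [NeZero n] (l : ℝ) : Set (En n) := {x | x 0 < l}

section Helpers
set_option maxHeartbeats 1000000
variable {n : ℕ} [NeZero n]

lemma En.dist_eq (x y : En n) : dist x y = Real.sqrt (∑ i, (x i - y i)^2) := by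
  rw [EuclideanSpace.dist_eq]; congr 1; apply Finset.sum_congr rfl; intro i _
  rw [Real.dist_eq, sq_abs]

lemma abs_coord_le_dist (x y : En n) (i : Fin n) : |x i - y i| ≤ dist x y := by
  rw [En.dist_eq, ← Real.sqrt_sq_eq_abs]
  apply Real.sqrt_le_sqrt
  exact Finset.single_le_sum (f := fun j => (x j - y j)^2) (fun j _ => sq_nonneg _)
    (Finset.mem_univ i)

lemma dist_le_dist_of_coord (x y z : En n) (h0 : |x 0 - z 0| ≤ |y 0 - z 0|)
    (h : ∀ i, i ≠ 0 → x i = y i) : dist x z ≤ dist y z := by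
  rw [En.dist_eq, En.dist_eq]
  apply Real.sqrt_le_sqrt
  apply Finset.sum_le_sum
  intro i _
  by_cases hi : i = 0
  · subst hi; rw [← sq_abs (x 0 - z 0), ← sq_abs (y 0 - z 0)]
    exact pow_le_pow_left₀ (abs_nonneg _) h0 2
  · rw [h i hi]

lemma dist_eq_abs_of_coord (x y : En n) (h : ∀ i, i ≠ 0 → x i = y i) :
    dist x y = |x 0 - y 0| := by
  rw [En.dist_eq, ← Real.sqrt_sq_eq_abs]
  congr 1
  rw [Finset.sum_eq_single 0]
  · intro i _ hi; rw [h i hi]; ring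
  · intro hi; exact absurd (Finset.mem_univ _) hi

lemma reflPt_reflPt (l : ℝ) (x : En n) : reflPt n l (reflPt n l x) = x := by
  ext i
  by_cases hi : i = 0
  · subst hi; simp [reflPt]
  · simp [reflPt, hi]

lemma dist_reflPt (l : ℝ) (x y : En n) : dist (reflPt n l x) (reflPt n l y) = dist x y := by
  rw [En.dist_eq, En.dist_eq]
  congr 1
  apply Finset.sum_congr rfl
  intro i _
  by_cases hi : i = 0
  · subst hi; simp [reflPt]; ring
  · simp [reflPt, hi]

lemma dist_reflPt_right (l : ℝ) (x y : En n) : dist x (reflPt n l y) = dist (reflPt n l x) y := by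
  conv_lhs => rw [← reflPt_reflPt (n := n) l x]
  rw [dist_reflPt]

variable {n : ℕ} [NeZero n]

def negFirstFun (n : ℕ) [NeZero n] (x : En n) : En n := WithLp.toLp 2 (fun i => if i = 0 then -x 0 else x i)

def shiftVec (n : ℕ) [NeZero n] (l : ℝ) : En n := WithLp.toLp 2 (fun i => if i = 0 then 2*l else 0)

lemma negFirstFun_invol (x : En n) : negFirstFun n (negFirstFun n x) = x := by
  ext i
  by_cases hi : i = 0
  · subst hi; simp [negFirstFun]
  · simp [negFirstFun, hi]

/-- The linear isometry negating the first coordinate. -/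
def negFirst (n : ℕ) [NeZero n] : En n ≃ₗᵢ[ℝ] En n where
  toFun := negFirstFun n
  invFun := negFirstFun n
  left_inv := negFirstFun_invol
  right_inv := negFirstFun_invol
  map_add' := by
    intro x y; ext i
    by_cases hi : i = 0
    · subst hi; simp [negFirstFun, PiLp.add_apply]; ring
    · simp [negFirstFun, hi, PiLp.add_apply]
  map_smul' := by
    intro c x; ext i
    by_cases hi : i = 0
    · subst hi; simp [negFirstFun, PiLp.smul_apply, smul_eq_mul]
    · simp [negFirstFun, hi, PiLp.smul_apply]
  norm_map' := by
    intro x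
    rw [EuclideanSpace.norm_eq, EuclideanSpace.norm_eq]
    congr 1
    apply Finset.sum_congr rfl
    intro i _
    by_cases hi : i = 0
    · subst hi; simp [negFirstFun]
    · simp [negFirstFun, hi]

lemma reflPt_eq_add (l : ℝ) (x : En n) :
    reflPt n l x = shiftVec n l + negFirst n x := by
  ext i
  by_cases hi : i = 0
  · subst hi; simp [reflPt, negFirst, negFirstFun, shiftVec, PiLp.add_apply]; ring
  · simp [reflPt, negFirst, negFirstFun, shiftVec, hi, PiLp.add_apply]

lemma measurePreserving_reflPt (l : ℝ) :
    MeasurePreserving (reflPt n l) (volume : Measure (En n)) volume := by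
  have h1 : MeasurePreserving (fun x : En n => shiftVec n l + x)
      volume volume := measurePreserving_add_left volume _
  have h2 := (negFirst n).measurePreserving
  have := h1.comp h2
  have e : reflPt n l = (fun x : En n => shiftVec n l + x) ∘ negFirst n :=
    funext fun x => reflPt_eq_add l x
  rw [e]; exact this

def reflEquiv (l : ℝ) : En n ≃ᵐ En n where
  toFun := reflPt n l
  invFun := reflPt n l
  left_inv := fun x => by
    ext i
    by_cases hi : i = 0
    · subst hi; simp [reflPt]
    · simp [reflPt, hi]
  right_inv := fun x => by
    ext i
    by_cases hi : i = 0
    · subst hi; simp [reflPt]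
    · simp [reflPt, hi]
  measurable_toFun := (measurePreserving_reflPt l).measurable
  measurable_invFun := (measurePreserving_reflPt l).measurable

lemma measurableEmbedding_reflPt (l : ℝ) :
    MeasurableEmbedding (reflPt n l : En n → En n) :=
  (reflEquiv (n := n) l).measurableEmbedding

lemma continuous_coord0 : Continuous (fun y : En n => y 0) :=
  (EuclideanSpace.proj (0 : Fin n) : En n →L[ℝ] ℝ).continuous

lemma volume_hyperplane (l : ℝ) : volume {z : En n | z 0 = l} = 0 := by
  classical
  set pt : En n := shiftVec n (l/2) with hpt
  set V : Submodule ℝ (En n) := LinearMap.ker (EuclideanSpace.projₗ (𝕜 := ℝ) (0 : Fin n)) with hV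
  set s : AffineSubspace ℝ (En n) := AffineSubspace.mk' pt V with hs
  have hset : {z : En n | z 0 = l} = (s : Set (En n)) := by
    ext z
    simp only [mem_setOf_eq, hs, SetLike.mem_coe, AffineSubspace.mem_mk', hV,
      LinearMap.mem_ker]
    constructor
    · intro hz
      show EuclideanSpace.projₗ (𝕜 := ℝ) (0 : Fin n) (z -ᵥ pt) = 0
      simp [EuclideanSpace.projₗ, hpt, shiftVec, PiLp.sub_apply, hz]
      ring
    · intro hz
      have : (z -ᵥ pt) 0 = 0 := hz
      have h2 : z 0 - pt 0 = 0 := this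
      simp only [hpt, shiftVec] at h2
      simp at h2
      linarith [h2]
  rw [hset]
  apply Measure.addHaar_affineSubspace
  intro htop
  have : shiftVec n ((l+1)/2) ∈ s := htop ▸ AffineSubspace.mem_top ℝ _ _
  rw [hs, AffineSubspace.mem_mk', hV, LinearMap.mem_ker] at this
  have h2 : (shiftVec n ((l+1)/2) -ᵥ pt) 0 = 0 := this
  simp [hpt, shiftVec, PiLp.sub_apply] at h2
  linarith

variable {n : ℕ} [NeZero n]

lemma integrable_inv_one_add_norm {p : ℝ} (hp : (n : ℝ) < p) :
    Integrable (fun y : En n => (1 + ‖y‖ ^ p)⁻¹) volume := by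
  have hp0 : 0 < p := lt_of_le_of_lt (Nat.cast_nonneg n) hp
  have hnr : (Module.finrank ℝ (En n) : ℝ) < p := by
    rwa [finrank_euclideanSpace_fin]
  refine ((integrable_one_add_norm (μ := (volume : Measure (En n))) hnr).const_mul
    ((2:ℝ)^p)).mono' ?_ (Eventually.of_forall fun y => ?_)
  · apply Measurable.aestronglyMeasurable
    fun_prop
  · have h0 : (0:ℝ) ≤ ‖y‖ := norm_nonneg y
    have h1 : (0:ℝ) < 1 + ‖y‖ ^ p := by positivity
    have key : (1 + ‖y‖) ^ p ≤ 2^p * (1 + ‖y‖ ^ p) := by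
      rcases le_total ‖y‖ 1 with h | h
      · calc (1 + ‖y‖) ^ p ≤ 2 ^ p := by
              apply Real.rpow_le_rpow (by positivity) (by linarith) hp0.le
            _ ≤ 2^p * (1 + ‖y‖^p) := by
              nth_rewrite 1 [← mul_one ((2:ℝ)^p)]
              apply mul_le_mul_of_nonneg_left _ (by positivity)
              nlinarith [Real.rpow_nonneg h0 p]
      · calc (1 + ‖y‖) ^ p ≤ (2 * ‖y‖) ^ p := by
              apply Real.rpow_le_rpow (by positivity) (by linarith) hp0.le
            _ = 2^p * ‖y‖^p := Real.mul_rpow (by norm_num) h0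
            _ ≤ 2^p * (1 + ‖y‖^p) := by
              apply mul_le_mul_of_nonneg_left _ (by positivity)
              linarith
    rw [Real.norm_eq_abs, abs_of_nonneg (by positivity), Real.rpow_neg (by positivity),
      ← one_div, ← one_div, mul_one_div, div_le_div_iff₀ h1 (by positivity), one_mul]
    exact key

lemma key_integrable {σ : ℝ} (hσ : 0 < σ) (W : En n → ℝ) (hW : MemL n σ W)
    (a : En n) {r : ℝ} (hr : 0 < r) (c₁ c₂ : ℝ) :
    IntegrableOn (fun y => (c₁ + c₂ * W y) / dist a y ^ ((n : ℝ) + σ))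
      {y : En n | r ≤ dist a y} volume := by
  set p : ℝ := (n : ℝ) + σ with hpdef
  have hp0 : 0 < p := by positivity
  have hpn : (n : ℝ) < p := by simp [hpdef]; linarith
  have hmeas : MeasurableSet {y : En n | r ≤ dist a y} :=
    (isClosed_le continuous_const (continuous_const.dist continuous_id)).measurableSet
  set C : ℝ := r ^ (-p) + (1 + ‖a‖/r) ^ p with hC
  have hC0 : 0 < C := by
    apply add_pos (Real.rpow_pos_of_pos hr _) (Real.rpow_pos_of_pos (by positivity) _)
  -- the dominating function
  have hdom : Integrable (fun y : En n =>
      |c₁| * C * (1 + ‖y‖ ^ p)⁻¹ + |c₂| * C * (|W y| / (1 + ‖y‖ ^ p))) volume := by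
    exact ((integrable_inv_one_add_norm hpn).const_mul _).add (hW.2.const_mul _)
  refine (hdom.integrableOn).mono' ?_ ?_
  · have h1 : AEStronglyMeasurable (fun y : En n => c₁ + c₂ * W y)
        (volume.restrict {y : En n | r ≤ dist a y}) :=
      (aestronglyMeasurable_const.add (hW.1.aestronglyMeasurable.const_mul c₂)).restrict
    have hc : Continuous (fun y : En n => dist a y ^ p) := by
      apply Continuous.rpow_const
      · exact continuous_const.dist continuous_id
      · intro y; exact Or.inr hp0.le
    have h2 : AEStronglyMeasurable (fun y : En n => dist a y ^ p)
        (volume.restrict {y : En n | r ≤ dist a y}) :=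
      hc.aestronglyMeasurable.restrict
    exact (h1.aemeasurable.div h2.aemeasurable).aestronglyMeasurable
  · rw [ae_restrict_iff' hmeas]
    apply ae_of_all
    intro y hy
    have hdy : r ≤ dist a y := hy
    have hd0 : 0 < dist a y := lt_of_lt_of_le hr hdy
    have hdp : 0 < dist a y ^ p := Real.rpow_pos_of_pos hd0 _
    have h1p : (0:ℝ) < 1 + ‖y‖ ^ p := by positivity
    -- key bound : 1 + ‖y‖^p ≤ C * dist a y ^ p
    have hkey : 1 + ‖y‖ ^ p ≤ C * dist a y ^ p := by
      have h1 : (1:ℝ) ≤ r ^ (-p) * dist a y ^ p := by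
        rw [Real.rpow_neg hr.le, ← one_div, div_mul_eq_mul_div, one_mul, le_div_iff₀
          (Real.rpow_pos_of_pos hr _)]
        rw [one_mul]
        exact Real.rpow_le_rpow hr.le hdy hp0.le
      have h2 : ‖y‖ ^ p ≤ (1 + ‖a‖/r) ^ p * dist a y ^ p := by
        rw [← Real.mul_rpow (by positivity) hd0.le]
        apply Real.rpow_le_rpow (norm_nonneg y) _ hp0.le
        have : ‖y‖ ≤ ‖a‖ + dist a y := by
          calc ‖y‖ = dist y 0 := by simp
            _ ≤ dist y a + dist a 0 := dist_triangle y a 0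
            _ = ‖a‖ + dist a y := by rw [dist_comm y a]; simp [dist_eq_norm]; ring
        have h3 : ‖a‖ ≤ (‖a‖/r) * dist a y := by
          rw [div_mul_eq_mul_div, le_div_iff₀ hr]
          exact mul_le_mul_of_nonneg_left hdy (norm_nonneg a)
        calc ‖y‖ ≤ ‖a‖ + dist a y := this
          _ ≤ (‖a‖/r) * dist a y + 1 * dist a y := by
              apply add_le_add h3; rw [one_mul]
          _ = (1 + ‖a‖/r) * dist a y := by ring
      calc 1 + ‖y‖ ^ p ≤ r ^ (-p) * dist a y ^ p + (1 + ‖a‖/r) ^ p * dist a y ^ p :=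
            add_le_add h1 h2
        _ = C * dist a y ^ p := by rw [hC]; ring
    -- conclude
    have hinv : (dist a y ^ p)⁻¹ ≤ C * (1 + ‖y‖ ^ p)⁻¹ := by
      rw [← one_div, ← one_div, mul_one_div, div_le_div_iff₀ hdp h1p, one_mul]
      exact hkey
    have habs : ‖(c₁ + c₂ * W y) / dist a y ^ p‖ ≤ (|c₁| + |c₂| * |W y|) * (dist a y ^ p)⁻¹ := by
      rw [Real.norm_eq_abs, abs_div, abs_of_pos hdp, div_eq_mul_inv]
      apply mul_le_mul_of_nonneg_right _ (inv_nonneg.2 hdp.le)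
      calc |c₁ + c₂ * W y| ≤ |c₁| + |c₂ * W y| := abs_add_le _ _
        _ = |c₁| + |c₂| * |W y| := by rw [abs_mul]
    calc ‖(c₁ + c₂ * W y) / dist a y ^ p‖
        ≤ (|c₁| + |c₂| * |W y|) * (dist a y ^ p)⁻¹ := habs
      _ ≤ (|c₁| + |c₂| * |W y|) * (C * (1 + ‖y‖ ^ p)⁻¹) := by
          apply mul_le_mul_of_nonneg_left hinv (by positivity)
      _ = |c₁| * C * (1 + ‖y‖ ^ p)⁻¹ + |c₂| * C * (|W y| / (1 + ‖y‖ ^ p)) := by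
          rw [div_eq_mul_inv]; ring

end Helpers

set_option maxHeartbeats 2000000 in
/-- (the narrow-region estimate (n-2): at a negative minimum
attained in the slab `{λ - δ < x₁ < λ}`, the fractional Laplacian is bounded by
`c C_{n,σ} δ^{-σ} W(x̄) < 0`, with `c` depending only on `n, σ`). -/
theorem statement8
    (n : ℕ) [NeZero n] (hn : 2 ≤ n)
    (σ : ℝ) (hσ : 0 < σ ∧ σ < 2) :
    ∃ c > 0, ∀ (lam δ cns : ℝ), 0 < δ → 0 < cns →
      ∀ (W : En n → ℝ), C11loc n W → MemL n σ W →
      (∀ x, W (reflPt n lam x) = -W x) →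
      ∀ xb : En n, lam - δ < xb 0 → xb 0 < lam →
      (∀ y ∈ halfSpace n lam, W xb ≤ W y) → W xb < 0 →
      ∀ L, HasFracLap n σ cns W xb L →
        L ≤ c * cns * δ ^ (-σ) * W xb ∧
        c * cns * δ ^ (-σ) * W xb < 0 := by
  obtain ⟨hσ0, hσ2⟩ := hσ
  classical
  set v : ℝ := (volume (ball (0 : En n) 1)).toReal with hv
  have hv0 : 0 < v := by
    rw [hv]
    exact ENNReal.toReal_pos (measure_ball_pos volume _ one_pos).ne' measure_ball_lt_top.ne
  set c0 : ℝ := (5:ℝ) ^ (-((n:ℝ)+σ)) * (2:ℝ) ^ (-(n:ℝ)) * v with hc0def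
  have hc00 : 0 < c0 := by
    have h5 : (0:ℝ) < (5:ℝ) ^ (-((n:ℝ)+σ)) := Real.rpow_pos_of_pos (by norm_num) _
    have h2 : (0:ℝ) < (2:ℝ) ^ (-(n:ℝ)) := Real.rpow_pos_of_pos (by norm_num) _
    rw [hc0def]; positivity
  refine ⟨2 * c0, by positivity, ?_⟩
  intro lam δ cns hδ hcns W hC11 hWL hanti xb hxb1 hxb2 hmin hWneg L hL
  have hδσ0 : (0:ℝ) < δ ^ (-σ) := Real.rpow_pos_of_pos hδ _
  have hBneg : 2 * c0 * cns * δ ^ (-σ) * W xb < 0 :=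
    mul_neg_of_pos_of_neg (by positivity) hWneg
  refine ⟨?_, hBneg⟩
  have hp0 : (0:ℝ) < (n:ℝ) + σ := by positivity
  -- distance to the hyperplane
  set d : ℝ := lam - xb 0 with hd
  have hd0 : 0 < d := by rw [hd]; linarith
  have hdδ : d < δ := by rw [hd]; linarith
  -- continuity radius: W < 0 near xb
  obtain ⟨ε₁, hε₁, K, -, hdiff, -⟩ := hC11 xb (mem_univ xb)
  have hWct : ContinuousAt W xb := (hdiff xb (mem_ball_self hε₁)).continuousAt
  have hnb : {y : En n | W y < 0} ∈ nhds xb := hWct.preimage_mem_nhds (Iio_mem_nhds hWneg)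
  obtain ⟨r, hr0, hrball⟩ := Metric.mem_nhds_iff.1 hnb
  set ε₀ : ℝ := min (min d δ) r with hε₀def
  have hε₀0 : 0 < ε₀ := lt_min (lt_min hd0 hδ) hr0
  have hε₀d : ε₀ ≤ d := le_trans (min_le_left _ _) (min_le_left _ _)
  have hε₀δ : ε₀ ≤ δ := le_trans (min_le_left _ _) (min_le_right _ _)
  have hε₀r : ε₀ ≤ r := min_le_right _ _
  -- the reflected point
  set Rxb : En n := reflPt n lam xb with hRxb
  have hRxb0 : Rxb 0 = 2*lam - xb 0 := by rw [hRxb]; simp [reflPt]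
  have hRxbi : ∀ i : Fin n, i ≠ 0 → xb i = Rxb i := by
    intro i hi; rw [hRxb]; simp [reflPt, hi]
  have hHSmeas : MeasurableSet (halfSpace n lam) := by
    have ho : IsOpen (halfSpace n lam) := by
      have he : halfSpace n lam = (fun y : En n => y 0) ⁻¹' (Iio lam) := rfl
      rw [he]; exact isOpen_Iio.preimage continuous_coord0
    exact ho.measurableSet
  have hdRxb : ∀ y : En n, y 0 ≤ lam → d ≤ dist Rxb y := by
    intro y hy
    have h1 : d ≤ |Rxb 0 - y 0| := by
      rw [hRxb0, abs_of_nonneg (by linarith), hd]; linarith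
    exact le_trans h1 (abs_coord_le_dist _ _ _)
  have hHSsub : halfSpace n lam ⊆ {y : En n | d ≤ dist Rxb y} := fun y hy =>
    hdRxb y (le_of_lt hy)
  -- integrability facts
  have igA : ∀ ε : ℝ, 0 < ε → IntegrableOn
      (fun y => (W xb - W y) / dist xb y ^ ((n:ℝ)+σ)) {y : En n | ε ≤ dist xb y} volume := by
    intro ε hε
    have h := key_integrable hσ0 W hWL xb hε (W xb) (-1)
    have e : (fun y : En n => (W xb + (-1) * W y) / dist xb y ^ ((n:ℝ)+σ))
        = fun y => (W xb - W y) / dist xb y ^ ((n:ℝ)+σ) := by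
      funext y; ring_nf
    rwa [e] at h
  have igSplus : IntegrableOn (fun z => (W xb + W z) / dist Rxb z ^ ((n:ℝ)+σ))
      (halfSpace n lam) volume := by
    have h := (key_integrable hσ0 W hWL Rxb hd0 (W xb) 1).mono_set hHSsub
    have e : (fun z : En n => (W xb + 1 * W z) / dist Rxb z ^ ((n:ℝ)+σ))
        = fun z => (W xb + W z) / dist Rxb z ^ ((n:ℝ)+σ) := by
      funext z; rw [one_mul]
    rwa [e] at h
  have igSminus : IntegrableOn (fun z => (W xb - W z) / dist Rxb z ^ ((n:ℝ)+σ))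
      (halfSpace n lam) volume := by
    have h := (key_integrable hσ0 W hWL Rxb hd0 (W xb) (-1)).mono_set hHSsub
    have e : (fun z : En n => (W xb + (-1) * W z) / dist Rxb z ^ ((n:ℝ)+σ))
        = fun z => (W xb - W z) / dist Rxb z ^ ((n:ℝ)+σ) := by
      funext z; ring_nf
    rwa [e] at h
  have igK : IntegrableOn (fun z => 1 / dist Rxb z ^ ((n:ℝ)+σ))
      {z : En n | d ≤ dist Rxb z} volume := by
    have h := key_integrable hσ0 W hWL Rxb hd0 1 0
    have e : (fun z : En n => ((1:ℝ) + 0 * W z) / dist Rxb z ^ ((n:ℝ)+σ))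
        = fun z => 1 / dist Rxb z ^ ((n:ℝ)+σ) := by
      funext z; norm_num
    rwa [e] at h
  -- the test ball S = ball s₀ (δ/2)
  set s₀ : En n := (show En n from WithLp.toLp 2 (fun i => if i = 0 then xb 0 - 2*δ else xb i)) with hs₀
  have hs₀i : ∀ i : Fin n, i ≠ 0 → s₀ i = xb i := by
    intro i hi; rw [hs₀]; simp [hi]
  have hs₀0 : s₀ 0 = xb 0 - 2*δ := by rw [hs₀]; simp
  have hds₀ : dist s₀ xb = 2*δ := by
    rw [dist_eq_abs_of_coord _ _ hs₀i, hs₀0, abs_of_nonpos (by linarith)]; ring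
  have hSsubHS : ball s₀ (δ/2) ⊆ halfSpace n lam := by
    intro y hy
    rw [mem_ball] at hy
    have h1 : |y 0 - s₀ 0| ≤ dist y s₀ := abs_coord_le_dist y s₀ 0
    have h2 : y 0 - s₀ 0 ≤ |y 0 - s₀ 0| := le_abs_self _
    show y 0 < lam
    have h3 := hs₀0
    linarith
  have hSsubd : ball s₀ (δ/2) ⊆ {z : En n | d ≤ dist Rxb z} := fun y hy => hHSsub (hSsubHS hy)
  have hdistRxbxb : dist Rxb xb = 2*d := by
    rw [dist_eq_abs_of_coord _ _ (fun i hi => (hRxbi i hi).symm), hRxb0,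
      abs_of_nonneg (by linarith), hd]; ring
  have hdistS : ∀ y ∈ ball s₀ (δ/2), dist Rxb y ≤ 5*δ := by
    intro y hy
    rw [mem_ball] at hy
    have h2 : dist s₀ y < δ/2 := by rw [dist_comm]; exact hy
    have h1 : dist xb s₀ = 2*δ := by rw [dist_comm]; exact hds₀
    calc dist Rxb y ≤ dist Rxb xb + dist xb s₀ + dist s₀ y := dist_triangle4 Rxb xb s₀ y
      _ ≤ 2*d + 2*δ + δ/2 := by rw [hdistRxbxb, h1]; linarith
      _ ≤ 5*δ := by linarith
  -- volume computation for the test ball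
  have hvolS : (volume (ball s₀ (δ/2))).toReal = (δ/2)^n * v := by
    rw [Measure.addHaar_ball volume s₀ (by positivity : (0:ℝ) ≤ δ/2)]
    rw [ENNReal.toReal_mul, ENNReal.toReal_ofReal (by positivity), hv]
    congr 2
    rw [finrank_euclideanSpace_fin]
  have harith : (δ/2)^n * v * (((5*δ)) ^ ((n:ℝ)+σ))⁻¹ = c0 * δ^(-σ) := by
    have e1 : ((5*δ):ℝ) ^ ((n:ℝ)+σ) = 5 ^ ((n:ℝ)+σ) * δ ^ ((n:ℝ)+σ) :=
      Real.mul_rpow (by norm_num) hδ.le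
    have e2 : ((δ:ℝ)/2)^n = δ^((n:ℝ)) / 2^((n:ℝ)) := by
      rw [div_pow, ← Real.rpow_natCast δ n, ← Real.rpow_natCast 2 n]
    have e3 : δ^((n:ℝ)) * (δ ^ ((n:ℝ)+σ))⁻¹ = δ^(-σ) := by
      rw [← Real.rpow_neg hδ.le, ← Real.rpow_add hδ]
      congr 1; ring
    rw [e1, e2, mul_inv, hc0def, Real.rpow_neg (by norm_num : (0:ℝ) ≤ 5),
      Real.rpow_neg (by norm_num : (0:ℝ) ≤ 2), ← e3]
    ring
  -- main estimate for each ε ∈ (0, ε₀)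
  have key : ∀ ε : ℝ, 0 < ε → ε < ε₀ →
      cns * ∫ y in {y : En n | ε ≤ dist xb y}, (W xb - W y) / dist xb y ^ ((n:ℝ)+σ)
        ≤ 2 * c0 * cns * δ ^ (-σ) * W xb := by
    intro ε hε0 hεε₀
    set A : Set (En n) := {y : En n | ε ≤ dist xb y} with hA
    have hAmeas : MeasurableSet A :=
      (isClosed_le continuous_const (continuous_const.dist continuous_id)).measurableSet
    have hεd : ε < d := lt_of_lt_of_le hεε₀ hε₀d
    have hεδ : ε < δ := lt_of_lt_of_le hεε₀ hε₀δ
    have hεr : ε < r := lt_of_lt_of_le hεε₀ hε₀r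
    have hSsubA : ball s₀ (δ/2) ⊆ A := by
      intro y hy
      rw [mem_ball] at hy
      have h1 : dist xb s₀ ≤ dist xb y + dist y s₀ := dist_triangle xb y s₀
      have h2 : dist xb s₀ = 2*δ := by rw [dist_comm]; exact hds₀
      show ε ≤ dist xb y
      linarith
    -- Step B : reflecting the far part of the integral
    have hpre : ∫ z in reflPt n lam ⁻¹' (A \ halfSpace n lam),
          (W xb - W (reflPt n lam z)) / dist xb (reflPt n lam z) ^ ((n:ℝ)+σ)
        = ∫ y in A \ halfSpace n lam, (W xb - W y) / dist xb y ^ ((n:ℝ)+σ) :=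
      (measurePreserving_reflPt (n := n) lam).setIntegral_preimage_emb
        (measurableEmbedding_reflPt (n := n) lam)
        (fun y => (W xb - W y) / dist xb y ^ ((n:ℝ)+σ)) (A \ halfSpace n lam)
    have hS'eq : reflPt n lam ⁻¹' (A \ halfSpace n lam) =ᵐ[volume] (halfSpace n lam) := by
      rw [ae_eq_set]
      constructor
      · apply measure_mono_null _ (volume_hyperplane (n := n) lam)
        intro z hz
        have h4 : ¬ ((reflPt n lam z) 0 < lam) := hz.1.2
        have h5 : (reflPt n lam z) 0 = 2*lam - z 0 := by simp [reflPt]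
        have h6 : ¬ (z 0 < lam) := hz.2
        show z 0 = lam
        rw [h5] at h4
        push_neg at h4 h6
        linarith
      · have he : halfSpace n lam \ reflPt n lam ⁻¹' (A \ halfSpace n lam) = ∅ := by
          apply eq_empty_iff_forall_notMem.2
          intro z hz
          obtain ⟨hz1, hz2⟩ := hz
          have hz1' : z 0 < lam := hz1
          apply hz2
          constructor
          · show ε ≤ dist xb (reflPt n lam z)
            rw [dist_reflPt_right, ← hRxb]
            have hh : d ≤ dist Rxb z := hdRxb z (le_of_lt hz1')
            linarith
          · show ¬ ((reflPt n lam z) 0 < lam)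
            have h5 : (reflPt n lam z) 0 = 2*lam - z 0 := by simp [reflPt]
            rw [h5]
            push_neg
            linarith
        rw [he]
        exact measure_empty
    have hstepB : ∫ y in A \ halfSpace n lam, (W xb - W y) / dist xb y ^ ((n:ℝ)+σ)
        = ∫ z in halfSpace n lam, (W xb + W z) / dist Rxb z ^ ((n:ℝ)+σ) := by
      rw [← hpre]
      have hcomp : (fun z : En n =>
            (W xb - W (reflPt n lam z)) / dist xb (reflPt n lam z) ^ ((n:ℝ)+σ))
          = fun z => (W xb + W z) / dist Rxb z ^ ((n:ℝ)+σ) := by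
        funext z
        rw [hanti z, dist_reflPt_right, ← hRxb]
        ring_nf
      rw [hcomp, setIntegral_congr_set hS'eq]
    -- Step C : compare the two kernels on the near part
    have hstepC : (∫ y in A ∩ halfSpace n lam, (W xb - W y) / dist xb y ^ ((n:ℝ)+σ))
        ≤ ∫ y in A ∩ halfSpace n lam, (W xb - W y) / dist Rxb y ^ ((n:ℝ)+σ) := by
      apply setIntegral_mono_on
      · exact (igA ε hε0).mono_set inter_subset_left
      · exact igSminus.mono_set inter_subset_right
      · exact hAmeas.inter hHSmeas
      · intro y hy
        have hWy : W xb ≤ W y := hmin y hy.2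
        have hd1 : ε ≤ dist xb y := hy.1
        have hy0 : y 0 < lam := hy.2
        have hdist : dist xb y ≤ dist Rxb y := by
          apply dist_le_dist_of_coord xb Rxb y _ hRxbi
          rw [hRxb0]
          rcases abs_cases (xb 0 - y 0) with ⟨h1, h2⟩ | ⟨h1, h2⟩ <;>
            rcases abs_cases (2*lam - xb 0 - y 0) with ⟨h3, h4⟩ | ⟨h3, h4⟩ <;> linarith
        have ht1 : 0 < dist xb y ^ ((n:ℝ)+σ) :=
          Real.rpow_pos_of_pos (lt_of_lt_of_le hε0 hd1) _
        have ht2 : dist xb y ^ ((n:ℝ)+σ) ≤ dist Rxb y ^ ((n:ℝ)+σ) :=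
          Real.rpow_le_rpow dist_nonneg hdist hp0.le
        have hnum : W xb - W y ≤ 0 := by linarith
        calc (W xb - W y) / dist xb y ^ ((n:ℝ)+σ)
            = (W xb - W y) * (1 / dist xb y ^ ((n:ℝ)+σ)) := by rw [mul_one_div]
          _ ≤ (W xb - W y) * (1 / dist Rxb y ^ ((n:ℝ)+σ)) :=
              mul_le_mul_of_nonpos_left (one_div_le_one_div_of_le ht1 ht2) hnum
          _ = (W xb - W y) / dist Rxb y ^ ((n:ℝ)+σ) := by rw [mul_one_div]
    -- Step E : the near part of the reflected integral is nonpositive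
    have hstepE : ∫ z in halfSpace n lam \ A, (W xb + W z) / dist Rxb z ^ ((n:ℝ)+σ) ≤ 0 := by
      refine integral_nonpos_of_ae ((ae_restrict_iff' (hHSmeas.diff hAmeas)).2 (ae_of_all _ ?_))
      intro z hz
      have h1 : dist xb z < ε := by
        by_contra h
        exact hz.2 (not_lt.1 h)
      have h2 : z ∈ ball xb r := by
        rw [mem_ball, dist_comm]
        linarith
      have h3 : W z < 0 := hrball h2
      have h4 : W xb + W z ≤ 0 := by linarith
      exact div_nonpos_iff.2 (Or.inr ⟨h4, Real.rpow_nonneg dist_nonneg _⟩)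
    -- the kernel mass lower bound
    have hm : c0 * δ^(-σ) ≤ ∫ y in A ∩ halfSpace n lam, 1 / dist Rxb y ^ ((n:ℝ)+σ) := by
      have hSA : ball s₀ (δ/2) ⊆ A ∩ halfSpace n lam :=
        fun y hy => ⟨hSsubA hy, hSsubHS hy⟩
      have h1 : ∫ y in ball s₀ (δ/2), 1 / dist Rxb y ^ ((n:ℝ)+σ)
          ≤ ∫ y in A ∩ halfSpace n lam, 1 / dist Rxb y ^ ((n:ℝ)+σ) := by
        apply setIntegral_mono_set
          (igK.mono_set (fun y hy => hHSsub hy.2))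
          (ae_of_all _ (fun y => by positivity))
          hSA.eventuallyLE
      have h2 : ∫ y in ball s₀ (δ/2), (((5*δ):ℝ) ^ ((n:ℝ)+σ))⁻¹
          ≤ ∫ y in ball s₀ (δ/2), 1 / dist Rxb y ^ ((n:ℝ)+σ) := by
        apply setIntegral_mono_on
        · exact integrableOn_const measure_ball_lt_top.ne
        · exact igK.mono_set hSsubd
        · exact measurableSet_ball
        · intro y hy
          have hdy : 0 < dist Rxb y :=
            lt_of_lt_of_le hd0 (hdRxb y (le_of_lt (hSsubHS hy)))
          rw [← one_div]
          exact one_div_le_one_div_of_le (Real.rpow_pos_of_pos hdy _)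
            (Real.rpow_le_rpow dist_nonneg (hdistS y hy) hp0.le)
      have h3 : ∫ y in ball s₀ (δ/2), (((5*δ):ℝ) ^ ((n:ℝ)+σ))⁻¹
          = (δ/2)^n * v * (((5*δ):ℝ) ^ ((n:ℝ)+σ))⁻¹ := by
        rw [setIntegral_const, smul_eq_mul, measureReal_def, hvolS]
      calc c0 * δ^(-σ) = (δ/2)^n * v * (((5*δ):ℝ) ^ ((n:ℝ)+σ))⁻¹ := harith.symm
        _ = ∫ y in ball s₀ (δ/2), (((5*δ):ℝ) ^ ((n:ℝ)+σ))⁻¹ := h3.symm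
        _ ≤ ∫ y in ball s₀ (δ/2), 1 / dist Rxb y ^ ((n:ℝ)+σ) := h2
        _ ≤ _ := h1
    -- combining the two near-part integrals
    have hcomb : (∫ y in A ∩ halfSpace n lam, (W xb - W y) / dist Rxb y ^ ((n:ℝ)+σ))
          + (∫ y in A ∩ halfSpace n lam, (W xb + W y) / dist Rxb y ^ ((n:ℝ)+σ))
        = ∫ y in A ∩ halfSpace n lam, (2 * W xb) / dist Rxb y ^ ((n:ℝ)+σ) := by
      rw [← integral_add (igSminus.mono_set inter_subset_right)
        (igSplus.mono_set inter_subset_right)]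
      apply integral_congr_ae
      apply ae_of_all
      intro y
      ring_nf
    have hmul : ∫ y in A ∩ halfSpace n lam, (2 * W xb) / dist Rxb y ^ ((n:ℝ)+σ)
        = (2 * W xb) * ∫ y in A ∩ halfSpace n lam, 1 / dist Rxb y ^ ((n:ℝ)+σ) := by
      rw [← integral_const_mul]
      apply integral_congr_ae
      apply ae_of_all
      intro y
      exact (mul_one_div (2 * W xb) _).symm
    have hsplit1 : ∫ y in A, (W xb - W y) / dist xb y ^ ((n:ℝ)+σ)
        = (∫ y in A ∩ halfSpace n lam, (W xb - W y) / dist xb y ^ ((n:ℝ)+σ))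
          + ∫ y in A \ halfSpace n lam, (W xb - W y) / dist xb y ^ ((n:ℝ)+σ) :=
      (integral_inter_add_diff hHSmeas (igA ε hε0)).symm
    have hsplit2 : ∫ z in halfSpace n lam, (W xb + W z) / dist Rxb z ^ ((n:ℝ)+σ)
        = (∫ z in A ∩ halfSpace n lam, (W xb + W z) / dist Rxb z ^ ((n:ℝ)+σ))
          + ∫ z in halfSpace n lam \ A, (W xb + W z) / dist Rxb z ^ ((n:ℝ)+σ) := by
      rw [← integral_inter_add_diff hAmeas igSplus, Set.inter_comm]
    have hfinal : ∫ y in A, (W xb - W y) / dist xb y ^ ((n:ℝ)+σ)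
        ≤ 2 * W xb * (c0 * δ^(-σ)) := by
      calc ∫ y in A, (W xb - W y) / dist xb y ^ ((n:ℝ)+σ)
          = (∫ y in A ∩ halfSpace n lam, (W xb - W y) / dist xb y ^ ((n:ℝ)+σ))
            + ∫ y in A \ halfSpace n lam, (W xb - W y) / dist xb y ^ ((n:ℝ)+σ) := hsplit1
        _ = (∫ y in A ∩ halfSpace n lam, (W xb - W y) / dist xb y ^ ((n:ℝ)+σ))
            + ∫ z in halfSpace n lam, (W xb + W z) / dist Rxb z ^ ((n:ℝ)+σ) := by
            rw [hstepB]
        _ ≤ (∫ y in A ∩ halfSpace n lam, (W xb - W y) / dist Rxb y ^ ((n:ℝ)+σ))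
            + ∫ z in halfSpace n lam, (W xb + W z) / dist Rxb z ^ ((n:ℝ)+σ) :=
            add_le_add_left hstepC _
        _ = (∫ y in A ∩ halfSpace n lam, (W xb - W y) / dist Rxb y ^ ((n:ℝ)+σ))
            + ((∫ z in A ∩ halfSpace n lam, (W xb + W z) / dist Rxb z ^ ((n:ℝ)+σ))
              + ∫ z in halfSpace n lam \ A, (W xb + W z) / dist Rxb z ^ ((n:ℝ)+σ)) := by
            rw [hsplit2]
        _ ≤ (∫ y in A ∩ halfSpace n lam, (W xb - W y) / dist Rxb y ^ ((n:ℝ)+σ))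
            + ((∫ z in A ∩ halfSpace n lam, (W xb + W z) / dist Rxb z ^ ((n:ℝ)+σ)) + 0) := by
            apply add_le_add_right
            exact add_le_add_right hstepE _
        _ = (∫ y in A ∩ halfSpace n lam, (W xb - W y) / dist Rxb y ^ ((n:ℝ)+σ))
            + (∫ z in A ∩ halfSpace n lam, (W xb + W z) / dist Rxb z ^ ((n:ℝ)+σ)) := by
            ring
        _ = ∫ y in A ∩ halfSpace n lam, (2 * W xb) / dist Rxb y ^ ((n:ℝ)+σ) := hcomb
        _ = (2 * W xb) * ∫ y in A ∩ halfSpace n lam, 1 / dist Rxb y ^ ((n:ℝ)+σ) := hmul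
        _ ≤ 2 * W xb * (c0 * δ^(-σ)) :=
            mul_le_mul_of_nonpos_left hm (by linarith)
    calc cns * ∫ y in A, (W xb - W y) / dist xb y ^ ((n:ℝ)+σ)
        ≤ cns * (2 * W xb * (c0 * δ^(-σ))) := mul_le_mul_of_nonneg_left hfinal hcns.le
      _ = 2 * c0 * cns * δ ^ (-σ) * W xb := by ring
  -- pass to the limit
  have hev : ∀ᶠ ε in nhdsWithin (0:ℝ) (Ioi 0),
      cns * ∫ y in {y : En n | ε ≤ dist xb y}, (W xb - W y) / dist xb y ^ ((n:ℝ)+σ)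
        ≤ 2 * c0 * cns * δ ^ (-σ) * W xb := by
    filter_upwards [Ioo_mem_nhdsGT_of_mem (⟨le_refl (0:ℝ), hε₀0⟩ : (0:ℝ) ∈ Ico (0:ℝ) ε₀)]
      with ε hε
    exact key ε hε.1 hε.2
  exact le_of_tendsto hL hev
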